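/- arXiv:2508.01061 — 5 statements merged into one kernel-verified Lean document; each statement's English description precedes it below -/
import Mathlib

section
/- Let T ∈ L(H) be selfadjoint, G-equivariant, Fredholm, with essential spectrum contained in (0,∞). Then T = S + K, where S ∈ L(H) is selfadjoint, G-equivariant, invertible and positive (⟨Su,u⟩ > 0 for u ≠ 0, with spectrum in (0,∞)), and K ∈ L(H) is compact, selfadjoint and G-equivariant. -/
open scoped RealInnerProductSpace

/-- A bounded selfadjoint operator is Fredholm iff its kernel is finite-dimensional
and its range is closed. -/
def IsFredholmOp {H : Type*} [NormedAddCommGroup H] [InnerProductSpace ℝ H]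
    (T : H →L[ℝ] H) : Prop :=
  FiniteDimensional ℝ (LinearMap.ker (T : H →ₗ[ℝ] H)) ∧ IsClosed (LinearMap.range (T : H →ₗ[ℝ] H) : Set H)

/-- The essential spectrum of a bounded selfadjoint operator: the set of real `μ` such that
`μ - T` is not Fredholm. -/
def essSpectrum {H : Type*} [NormedAddCommGroup H] [InnerProductSpace ℝ H]
    (T : H →L[ℝ] H) : Set ℝ :=
  {μ : ℝ | ¬ IsFredholmOp (μ • (1 : H →L[ℝ] H) - T)}

/-- Equivariance of a bounded operator with respect to an orthogonal representation `ρ`. -/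
def IsEquivariant {H : Type*} [NormedAddCommGroup H] [InnerProductSpace ℝ H]
    {G : Type*} [Group G] (ρ : G →* (H ≃ₗᵢ[ℝ] H)) (T : H →L[ℝ] H) : Prop :=
  ∀ (g : G) (u : H), T (ρ g u) = ρ g (T u)

section Aux

variable {H : Type*} [NormedAddCommGroup H] [InnerProductSpace ℝ H] [CompleteSpace H]

lemma aux_bounded_below (A : H →L[ℝ] H) (hA : IsSelfAdjoint A)
    (hker : FiniteDimensional ℝ (LinearMap.ker (A : H →ₗ[ℝ] H)))
    (hran : IsClosed (LinearMap.range (A : H →ₗ[ℝ] H) : Set H)) :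
    ∃ c : ℝ, 0 < c ∧ ∀ v ∈ (LinearMap.ker (A : H →ₗ[ℝ] H))ᗮ, c * ‖v‖ ≤ ‖A v‖ := by
  classical
  set N := LinearMap.ker (A : H →ₗ[ℝ] H) with hN
  haveI : CompleteSpace N := FiniteDimensional.complete ℝ N
  haveI : CompleteSpace (LinearMap.range (A : H →ₗ[ℝ] H)) := hran.completeSpace_coe
  haveI : CompleteSpace ↥Nᗮ := N.isClosed_orthogonal.completeSpace_coe
  have hsym := hA.isSymmetric
  have hmaps : ∀ v : ↥Nᗮ, A (v : H) ∈ Nᗮ := by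
    intro v
    rw [Submodule.mem_orthogonal]
    intro n hn
    have : A n = 0 := hn
    calc ⟪n, A v⟫ = ⟪A n, (v : H)⟫ := (hsym n v).symm
    _ = 0 := by rw [this, inner_zero_left]
  have hRle : LinearMap.range (A : H →ₗ[ℝ] H) ≤ Nᗮ := by
    rintro - ⟨x, rfl⟩
    rw [Submodule.mem_orthogonal]
    intro n hn
    have hn0 : A n = 0 := hn
    calc ⟪n, A x⟫ = ⟪A n, x⟫ := (hsym n x).symm
    _ = 0 := by rw [hn0, inner_zero_left]
  have hleR : (Nᗮ : Submodule ℝ H) ≤ LinearMap.range (A : H →ₗ[ℝ] H) := by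
    intro v hv
    set R := LinearMap.range (A : H →ₗ[ℝ] H) with hR
    have hq : v - (Submodule.orthogonalProjection R v : H) ∈ Rᗮ :=
      Submodule.sub_starProjection_mem_orthogonal v
    have hAq : A (v - (Submodule.orthogonalProjection R v : H)) = 0 := by
      rw [← inner_self_eq_zero (𝕜 := ℝ)]
      have := hq (A (A (v - Submodule.orthogonalProjection R v)))
        (LinearMap.mem_range_self _ _)
      calc ⟪A (v - (Submodule.orthogonalProjection R v : H)), A (v - (Submodule.orthogonalProjection R v : H))⟫
          = ⟪A (A (v - (Submodule.orthogonalProjection R v : H))), v - (Submodule.orthogonalProjection R v : H)⟫ :=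
            (hsym _ _).symm
      _ = 0 := this
    have hqN : v - (Submodule.orthogonalProjection R v : H) ∈ N := hAq
    have hqNperp : v - (Submodule.orthogonalProjection R v : H) ∈ Nᗮ :=
      Submodule.sub_mem _ hv (hRle (Submodule.orthogonalProjection R v).2)
    have hq0 : v - (Submodule.orthogonalProjection R v : H) = 0 := by
      rw [← inner_self_eq_zero (𝕜 := ℝ)]
      exact hqNperp _ hqN
    have : v = (Submodule.orthogonalProjection R v : H) := by
      rw [sub_eq_zero] at hq0; exact hq0
    rw [this]; exact (Submodule.orthogonalProjection R v).2
  let g : ↥Nᗮ →L[ℝ] ↥Nᗮ := (A.comp Nᗮ.subtypeL).codRestrict Nᗮ (fun v => hmaps v)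
  have hginj : LinearMap.ker (g : ↥Nᗮ →ₗ[ℝ] ↥Nᗮ) = ⊥ := by
    rw [LinearMap.ker_eq_bot']
    intro v hv
    have hv0 : A (v : H) = 0 := congrArg Subtype.val hv
    have : (v : H) ∈ N := hv0
    have : (v : H) = 0 := by
      rw [← inner_self_eq_zero (𝕜 := ℝ)]
      exact v.2 _ this
    exact Subtype.ext this
  have hgsurj : LinearMap.range (g : ↥Nᗮ →ₗ[ℝ] ↥Nᗮ) = ⊤ := by
    rw [LinearMap.range_eq_top]
    rintro ⟨v, hv⟩
    obtain ⟨x, hx⟩ := hleR hv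
    refine ⟨⟨x - (Submodule.orthogonalProjection N x : H), Submodule.sub_starProjection_mem_orthogonal x⟩, ?_⟩
    apply Subtype.ext
    have hAo : A ((Submodule.orthogonalProjection N x : H)) = 0 := (Submodule.orthogonalProjection N x).2
    show A (x - (Submodule.orthogonalProjection N x : H)) = v
    rw [map_sub, hAo, sub_zero]; exact hx
  let e := ContinuousLinearEquiv.ofBijective g hginj hgsurj
  have hKpos : (0:ℝ) < (‖(e.symm : ↥Nᗮ →L[ℝ] ↥Nᗮ)‖₊ : ℝ) + 1 :=
    add_pos_of_nonneg_of_pos (NNReal.coe_nonneg _) one_pos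
  refine ⟨((‖(e.symm : ↥Nᗮ →L[ℝ] ↥Nᗮ)‖₊ : ℝ) + 1)⁻¹, inv_pos.mpr hKpos, ?_⟩
  intro v hv
  rw [inv_mul_le_iff₀ hKpos]
  have h1 : ‖(⟨v, hv⟩ : ↥Nᗮ)‖ ≤ ‖(e.symm : ↥Nᗮ →L[ℝ] ↥Nᗮ)‖₊ * ‖e ⟨v, hv⟩‖ := by
    have h0 := e.antilipschitz.le_mul_dist ⟨v, hv⟩ 0
    rw [map_zero, dist_zero_right, dist_zero_right] at h0
    exact h0
  have h2 : ‖e ⟨v, hv⟩‖ = ‖A v‖ := by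
    have : ((e ⟨v, hv⟩ : ↥Nᗮ) : H) = A v := rfl
    rw [← this]; rfl
  have h3 : ‖(⟨v, hv⟩ : ↥Nᗮ)‖ = ‖v‖ := rfl
  rw [h3, h2] at h1
  nlinarith [norm_nonneg (A v), NNReal.coe_nonneg (‖(e.symm : ↥Nᗮ →L[ℝ] ↥Nᗮ)‖₊)]

lemma aux_coercive_isUnit (S : H →L[ℝ] H) {ε : ℝ} (hε : 0 < ε)
    (hcoer : ∀ u : H, ε * ‖u‖ ^ 2 ≤ ⟪S u, u⟫) : IsUnit S := by
  have hbb : ∀ u : H, ‖u‖ ≤ ε⁻¹ * ‖S u‖ := by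
    intro u
    rcases eq_or_ne u 0 with rfl | hu
    · simp
    · have h1 : ε * ‖u‖ ^ 2 ≤ ‖S u‖ * ‖u‖ :=
        le_trans (hcoer u) (real_inner_le_norm _ _)
      have hnu : 0 < ‖u‖ := norm_pos_iff.mpr hu
      rw [le_inv_mul_iff₀ hε]
      nlinarith
  have hanti : AntilipschitzWith (Real.toNNReal ε)⁻¹ S := by
    apply S.antilipschitz_of_bound
    intro x
    rw [NNReal.coe_inv, Real.coe_toNNReal _ hε.le]
    exact hbb x
  have hdense : (LinearMap.range (S : H →ₗ[ℝ] H)).topologicalClosure = ⊤ := by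
    set M := (LinearMap.range (S : H →ₗ[ℝ] H)).topologicalClosure with hM
    haveI : CompleteSpace M :=
      (Submodule.isClosed_topologicalClosure _).completeSpace_coe
    rw [← Submodule.orthogonal_eq_bot_iff]
    rw [Submodule.eq_bot_iff]
    intro w hw
    have hw0 : ⟪S w, w⟫ = 0 := by
      refine hw (S w) ?_
      exact Submodule.le_topologicalClosure _ (LinearMap.mem_range_self _ _)
    have := hcoer w
    rw [hw0] at this
    have : ‖w‖ ^ 2 ≤ 0 := by nlinarith
    have : ‖w‖ = 0 := by nlinarith [norm_nonneg w, sq_nonneg ‖w‖]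
    exact norm_eq_zero.mp this
  have hbij : Function.Bijective S := by
    rw [ContinuousLinearMap.bijective_iff_dense_range_and_antilipschitz]
    exact ⟨hdense, _, hanti⟩
  let e := ContinuousLinearEquiv.ofBijective S
    (LinearMap.ker_eq_bot.mpr hbij.1) (LinearMap.range_eq_top.mpr hbij.2)
  refine ⟨⟨S, (e.symm : H →L[ℝ] H), ?_, ?_⟩, rfl⟩
  · ext x
    show S (e.symm x) = x
    have : e (e.symm x) = x := e.apply_symm_apply x
    exact this
  · ext x
    show e.symm (S x) = x
    have : e.symm (e x) = x := e.symm_apply_apply x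
    exact this

lemma aux_compact (f : H →L[ℝ] H) (E : Submodule ℝ H) (hE : FiniteDimensional ℝ E)
    (h : ∀ x, f x ∈ E) : IsCompactOperator ⇑f := by
  refine ⟨closure ((E.subtypeL) '' Metric.closedBall 0 ‖f‖), ?_, ?_⟩
  · have hcb : IsCompact (Metric.closedBall (0 : E) ‖f‖) := by
      haveI : ProperSpace E := FiniteDimensional.proper ℝ E
      exact isCompact_closedBall _ _
    have himg : IsCompact ((E.subtypeL) '' Metric.closedBall 0 ‖f‖) :=
      hcb.image E.subtypeL.continuous
    rw [himg.isClosed.closure_eq]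
    exact himg
  · rw [mem_nhds_iff]
    refine ⟨Metric.ball 0 1, ?_, Metric.isOpen_ball, by simp⟩
    intro x hx
    apply subset_closure
    refine ⟨⟨f x, h x⟩, ?_, rfl⟩
    rw [Metric.mem_closedBall, dist_zero_right]
    show ‖f x‖ ≤ ‖f‖
    calc ‖f x‖ ≤ ‖f‖ * ‖x‖ := f.le_opNorm x
    _ ≤ ‖f‖ * 1 := by
        have : ‖x‖ ≤ 1 := le_of_lt (by simpa using hx)
        nlinarith [norm_nonneg f, norm_nonneg x]
    _ = ‖f‖ := mul_one _

end Aux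

set_option maxHeartbeats 1000000 in
theorem stmt2
    {H : Type*} [NormedAddCommGroup H] [InnerProductSpace ℝ H] [CompleteSpace H]
    [TopologicalSpace.SeparableSpace H]
    {G : Type*} [Group G] [TopologicalSpace G] [IsTopologicalGroup G] [CompactSpace G]
    {EG : Type*} [NormedAddCommGroup EG] [NormedSpace ℝ EG]
    {HG : Type*} [TopologicalSpace HG] {IG : ModelWithCorners ℝ EG HG}
    [ChartedSpace HG G] [LieGroup IG (⊤ : ℕ∞) G]
    (ρ : G →* (H ≃ₗᵢ[ℝ] H)) (hρ : ∀ u : H, Continuous fun g : G => ρ g u)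
    (T : H →L[ℝ] H)
    (hsa : IsSelfAdjoint T) (hequiv : IsEquivariant ρ T) (hFred : IsFredholmOp T)
    (hess : essSpectrum T ⊆ Set.Ioi (0:ℝ)) :
    ∃ S K : H →L[ℝ] H,
      IsSelfAdjoint S ∧ IsEquivariant ρ S ∧ IsUnit S ∧
      (∀ u : H, u ≠ 0 → 0 < ⟪S u, u⟫) ∧ spectrum ℝ S ⊆ Set.Ioi (0:ℝ) ∧
      IsCompactOperator ⇑K ∧ IsSelfAdjoint K ∧ IsEquivariant ρ K ∧
      T = S + K := by
  classical
  have hsym := hsa.isSymmetric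
  -- every `μ ≤ 0` is outside the essential spectrum
  have hfred : ∀ μ : ℝ, μ ≤ 0 → IsFredholmOp (μ • (1 : H →L[ℝ] H) - T) := by
    intro μ hμ
    by_contra hc
    have hmem : μ ∈ essSpectrum T := hc
    have := hess hmem
    rw [Set.mem_Ioi] at this
    linarith
  have hsaA : ∀ μ : ℝ, IsSelfAdjoint (μ • (1 : H →L[ℝ] H) - T) := by
    intro μ
    exact (IsSelfAdjoint.smul (star_trivial μ) (IsSelfAdjoint.one (H →L[ℝ] H))).sub hsa
  have hker_mem : ∀ (μ : ℝ) (u : H),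
      u ∈ LinearMap.ker ((μ • (1 : H →L[ℝ] H) - T : H →L[ℝ] H) : H →ₗ[ℝ] H) ↔ T u = μ • u := by
    intro μ u
    rw [LinearMap.mem_ker]
    rw [ContinuousLinearMap.coe_coe, ContinuousLinearMap.sub_apply, ContinuousLinearMap.smul_apply,
      ContinuousLinearMap.one_apply, sub_eq_zero]
    exact eq_comm
  -- the set of nonpositive eigenvalues
  set Λ : Set ℝ := {μ : ℝ | μ ≤ 0 ∧ ∃ u : H, u ≠ 0 ∧ T u = μ • u} with hΛ
  have hΛsub : Λ ⊆ Set.Icc (-‖T‖) 0 := by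
    rintro μ ⟨hμ, u, hu0, hTu⟩
    have hupos : 0 < ‖u‖ := norm_pos_iff.mpr hu0
    have h1 : |μ| * ‖u‖ ≤ ‖T‖ * ‖u‖ := by
      have := T.le_opNorm u
      rw [hTu, norm_smul, Real.norm_eq_abs] at this
      exact this
    have h2 : |μ| ≤ ‖T‖ := le_of_mul_le_mul_right h1 hupos
    exact ⟨by linarith [neg_abs_le μ, abs_nonneg μ], hμ⟩
  have hΛfin : Λ.Finite := by
    by_contra hinf
    have hinf' : Λ.Infinite := hinf
    obtain ⟨μs, hμsK, hacc⟩ := hinf'.exists_accPt_of_subset_isCompact isCompact_Icc hΛsub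
    have hμs0 : μs ≤ 0 := hμsK.2
    set A := μs • (1 : H →L[ℝ] H) - T with hA
    have hAfred := hfred μs hμs0
    obtain ⟨c, hc, hcb⟩ := aux_bounded_below A (hsaA μs) hAfred.1 hAfred.2
    rw [accPt_iff_nhds] at hacc
    obtain ⟨μ, ⟨hμball, hμΛ⟩, hμne⟩ := hacc (Metric.ball μs c) (Metric.ball_mem_nhds _ hc)
    obtain ⟨hμ0, u, hu0, hTu⟩ := hμΛ
    have horth : u ∈ (LinearMap.ker (A : H →ₗ[ℝ] H))ᗮ := by
      rw [Submodule.mem_orthogonal]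
      intro w hw
      have hTw : T w = μs • w := (hker_mem μs w).mp hw
      have h1 : μs * ⟪w, u⟫ = μ * ⟪w, u⟫ := by
        calc μs * ⟪w, u⟫ = ⟪μs • w, u⟫ := (real_inner_smul_left _ _ _).symm
        _ = ⟪T w, u⟫ := by rw [hTw]
        _ = ⟪w, T u⟫ := hsym w u
        _ = ⟪w, μ • u⟫ := by rw [hTu]
        _ = μ * ⟪w, u⟫ := real_inner_smul_right _ _ _
      have h2 : (μs - μ) * ⟪w, u⟫ = 0 := by ring_nf; linarith
      rcases mul_eq_zero.mp h2 with h3 | h3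
      · exact absurd (by linarith [sub_eq_zero.mp h3] : μ = μs) hμne
      · exact h3
    have hAu : ‖A u‖ < c * ‖u‖ := by
      have hval : A u = (μs - μ) • u := by
        rw [hA, ContinuousLinearMap.sub_apply, ContinuousLinearMap.smul_apply,
          ContinuousLinearMap.one_apply, hTu, sub_smul]
      rw [hval, norm_smul, Real.norm_eq_abs]
      have hlt : |μs - μ| < c := by
        rw [abs_sub_comm]
        have := hμball
        rw [Metric.mem_ball, Real.dist_eq] at this
        exact this
      have hupos : 0 < ‖u‖ := norm_pos_iff.mpr hu0
      nlinarith
    exact absurd (hcb u horth) (not_le.mpr hAu)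
  haveI hΛfinite : Finite ↥Λ := hΛfin.to_subtype
  -- the nonpositive spectral subspace
  set E : Submodule ℝ H := ⨆ μ : ↥Λ, LinearMap.ker (((μ : ℝ) • (1 : H →L[ℝ] H) - T : H →L[ℝ] H) : H →ₗ[ℝ] H) with hE
  haveI hkerFD : ∀ μ : ↥Λ, FiniteDimensional ℝ
      (LinearMap.ker (((μ : ℝ) • (1 : H →L[ℝ] H) - T : H →L[ℝ] H) : H →ₗ[ℝ] H)) := fun μ => (hfred μ μ.2.1).1
  haveI hEfd : FiniteDimensional ℝ E := by
    rw [hE]; infer_instance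
  haveI : CompleteSpace E := FiniteDimensional.complete ℝ E
  have hEker : ∀ μ : ℝ, μ ≤ 0 → LinearMap.ker ((μ • (1 : H →L[ℝ] H) - T : H →L[ℝ] H) : H →ₗ[ℝ] H) ≤ E := by
    intro μ hμ
    rcases eq_or_ne (LinearMap.ker ((μ • (1 : H →L[ℝ] H) - T : H →L[ℝ] H) : H →ₗ[ℝ] H)) ⊥ with h | h
    · rw [h]; exact bot_le
    · obtain ⟨u, hu, hu0⟩ := Submodule.ne_bot_iff _ |>.mp h
      have hμΛ : μ ∈ Λ := ⟨hμ, u, hu0, (hker_mem μ u).mp hu⟩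
      exact le_iSup (fun ν : ↥Λ => LinearMap.ker (((ν : ℝ) • (1 : H →L[ℝ] H) - T : H →L[ℝ] H) : H →ₗ[ℝ] H)) ⟨μ, hμΛ⟩
  have hmemE_T : ∀ x ∈ E, T x ∈ E := by
    intro x hx
    refine Submodule.iSup_induction (motive := fun y => T y ∈ E) _ hx ?_ (by simp) ?_
    · intro μ y hy
      apply hEker μ μ.2.1
      rw [hker_mem] at hy ⊢
      rw [hy, map_smul, hy]
    · intro y z hy hz
      rw [map_add]
      exact E.add_mem hy hz
  have hmemE_ρ : ∀ (g : G), ∀ x ∈ E, ρ g x ∈ E := by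
    intro g x hx
    refine Submodule.iSup_induction (motive := fun y => ρ g y ∈ E) _ hx ?_ (by simp) ?_
    · intro μ y hy
      apply hEker μ μ.2.1
      rw [hker_mem] at hy ⊢
      rw [hequiv g y, hy, map_smul]
    · intro y z hy hz
      rw [map_add]
      exact E.add_mem hy hz
  have hEperp_T : ∀ v ∈ Eᗮ, T v ∈ Eᗮ := by
    intro v hv
    rw [Submodule.mem_orthogonal]
    intro e he
    calc ⟪e, T v⟫ = ⟪T e, v⟫ := (hsym e v).symm
    _ = 0 := hv _ (hmemE_T e he)
  have hEperp_ρ : ∀ (g : G), ∀ w ∈ Eᗮ, ρ g w ∈ Eᗮ := by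
    intro g w hw
    rw [Submodule.mem_orthogonal]
    intro e he
    have h1 : ρ g (ρ g⁻¹ e) = e := by
      have h2 : (ρ g) * (ρ g⁻¹) = 1 := by rw [← map_mul, mul_inv_cancel, map_one]
      calc ρ g (ρ g⁻¹ e) = ((ρ g) * (ρ g⁻¹)) e := rfl
      _ = e := by rw [h2]; rfl
    calc ⟪e, ρ g w⟫ = ⟪ρ g (ρ g⁻¹ e), ρ g w⟫ := by rw [h1]
    _ = ⟪ρ g⁻¹ e, w⟫ := LinearIsometryEquiv.inner_map_map _ _ _
    _ = 0 := hw _ (hmemE_ρ g⁻¹ e he)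
  -- positivity with a gap on `Eᗮ`
  have hpos : ∃ ε : ℝ, 0 < ε ∧ ∀ v ∈ Eᗮ, ε * ‖v‖ ^ 2 ≤ ⟪T v, v⟫ := by
    by_contra hcon
    push_neg at hcon
    have hnorm : ∀ ε : ℝ, 0 < ε → ∃ w : H, w ∈ Eᗮ ∧ ‖w‖ = 1 ∧ ⟪T w, w⟫ < ε := by
      intro ε hε
      obtain ⟨v, hvE, hvlt⟩ := hcon ε hε
      have hv0 : v ≠ 0 := by
        rintro rfl
        simp at hvlt
      have hnv : 0 < ‖v‖ := norm_pos_iff.mpr hv0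
      refine ⟨‖v‖⁻¹ • v, Eᗮ.smul_mem _ hvE, ?_, ?_⟩
      · rw [norm_smul, Real.norm_eq_abs, abs_inv, abs_of_pos hnv, inv_mul_cancel₀ hnv.ne']
      · rw [map_smul, real_inner_smul_left, real_inner_smul_right]
        have hkey : ‖v‖⁻¹ * (‖v‖⁻¹ * ⟪T v, v⟫) < ‖v‖⁻¹ * (‖v‖⁻¹ * (ε * ‖v‖ ^ 2)) :=
          mul_lt_mul_of_pos_left
            (mul_lt_mul_of_pos_left hvlt (inv_pos.mpr hnv)) (inv_pos.mpr hnv)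
        have heq : ‖v‖⁻¹ * (‖v‖⁻¹ * (ε * ‖v‖ ^ 2)) = ε := by
          rw [sq]
          field_simp
        rw [heq] at hkey
        exact hkey
    set Q : Set ℝ := (fun v : H => ⟪T v, v⟫) '' {v : H | v ∈ Eᗮ ∧ ‖v‖ = 1} with hQ
    have hQne : Q.Nonempty := by
      obtain ⟨w, h1, h2, _⟩ := hnorm 1 one_pos
      exact ⟨_, ⟨w, ⟨h1, h2⟩, rfl⟩⟩
    have hQbdd : BddBelow Q := by
      refine ⟨-‖T‖, ?_⟩
      rintro q ⟨v, ⟨hvE, hv1⟩, rfl⟩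
      have h1 : |⟪T v, v⟫| ≤ ‖T v‖ * ‖v‖ := abs_real_inner_le_norm _ _
      have h2 : ‖T v‖ ≤ ‖T‖ := by
        have := T.le_opNorm v
        rw [hv1, mul_one] at this
        exact this
      rw [hv1, mul_one] at h1
      have := neg_abs_le ⟪T v, v⟫
      linarith
    set m : ℝ := sInf Q with hm
    have hmlb : ∀ v ∈ Eᗮ, m * ‖v‖ ^ 2 ≤ ⟪T v, v⟫ := by
      intro v hv
      rcases eq_or_ne v 0 with rfl | hv0
      · simp
      · have hnv : 0 < ‖v‖ := norm_pos_iff.mpr hv0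
        have hmem : ⟪T (‖v‖⁻¹ • v), ‖v‖⁻¹ • v⟫ ∈ Q := by
          refine ⟨‖v‖⁻¹ • v, ⟨Eᗮ.smul_mem _ hv, ?_⟩, rfl⟩
          rw [norm_smul, Real.norm_eq_abs, abs_inv, abs_of_pos hnv, inv_mul_cancel₀ hnv.ne']
        have hle : m ≤ ⟪T (‖v‖⁻¹ • v), ‖v‖⁻¹ • v⟫ := csInf_le hQbdd hmem
        rw [map_smul, real_inner_smul_left, real_inner_smul_right] at hle
        have hkey := mul_le_mul_of_nonneg_left hle (sq_nonneg ‖v‖)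
        have heq : ‖v‖ ^ 2 * (‖v‖⁻¹ * (‖v‖⁻¹ * ⟪T v, v⟫)) = ⟪T v, v⟫ := by
          rw [sq]
          field_simp
        rw [heq] at hkey
        linarith
    have hm0 : m ≤ 0 := by
      by_contra h
      push_neg at h
      obtain ⟨w, hwE, hw1, hwlt⟩ := hnorm m h
      have : m ≤ ⟪T w, w⟫ := csInf_le hQbdd ⟨w, ⟨hwE, hw1⟩, rfl⟩
      linarith
    set A := m • (1 : H →L[ℝ] H) - T with hA
    have hAfred := hfred m hm0
    obtain ⟨c, hc, hcb⟩ := aux_bounded_below A (hsaA m) hAfred.1 hAfred.2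
    have hEperpker : Eᗮ ≤ (LinearMap.ker (A : H →ₗ[ℝ] H))ᗮ :=
      Submodule.orthogonal_le (hEker m hm0)
    set C : ℝ := ‖T‖ + |m| + 1 with hC
    have hCpos : 0 < C := by positivity
    have hclt : m < m + c ^ 2 / C := by
      have : 0 < c ^ 2 / C := div_pos (pow_pos hc 2) hCpos
      linarith
    obtain ⟨q, hqQ, hqlt⟩ := exists_lt_of_csInf_lt hQne hclt
    obtain ⟨w, ⟨hwE, hw1⟩, rfl⟩ := hqQ
    set z := T w - m • w with hz
    have hzE : z ∈ Eᗮ := Eᗮ.sub_mem (hEperp_T w hwE) (Eᗮ.smul_mem m hwE)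
    have hβ0 : 0 ≤ ⟪T w, w⟫ - m := by
      have := hmlb w hwE
      rw [hw1] at this
      nlinarith
    have hβlt : ⟪T w, w⟫ - m < c ^ 2 / C := by linarith
    have hBpos : ∀ x ∈ Eᗮ, 0 ≤ ⟪T x, x⟫ - m * ‖x‖ ^ 2 := fun x hx => by
      linarith [hmlb x hx]
    have hzbound : ⟪T z, z⟫ - m * ‖z‖ ^ 2 ≤ C * ‖z‖ ^ 2 := by
      have h1 : ⟪T z, z⟫ ≤ ‖T z‖ * ‖z‖ := real_inner_le_norm _ _
      have h2 : ‖T z‖ ≤ ‖T‖ * ‖z‖ := T.le_opNorm z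
      have h3 : -(m * ‖z‖ ^ 2) ≤ |m| * ‖z‖ ^ 2 := by
        nlinarith [neg_abs_le m, sq_nonneg ‖z‖, abs_nonneg m]
      nlinarith [norm_nonneg z, sq_nonneg ‖z‖]
    -- expansion of the quadratic form at `w - C⁻¹ • z`
    have hww : ⟪w, w⟫ = 1 := by
      rw [real_inner_self_eq_norm_sq, hw1]; norm_num
    have hzz : ⟪z, z⟫ = ‖z‖ ^ 2 := real_inner_self_eq_norm_sq z
    have f3 : ⟪w, z⟫ = ⟪z, w⟫ := real_inner_comm _ _
    have hTwz : T w = z + m • w := by rw [hz]; abel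
    have f1 : ⟪T w, z⟫ = ‖z‖ ^ 2 + m * ⟪z, w⟫ := by
      rw [hTwz, inner_add_left, real_inner_smul_left, hzz, f3]
    have f2 : ⟪T z, w⟫ = ‖z‖ ^ 2 + m * ⟪z, w⟫ := by
      rw [show ⟪T z, w⟫ = ⟪z, T w⟫ from hsym z w, hTwz, inner_add_right, real_inner_smul_right, hzz]
    have hnx : ‖w - C⁻¹ • z‖ ^ 2 = 1 - 2 * C⁻¹ * ⟪z, w⟫ + C⁻¹ ^ 2 * ‖z‖ ^ 2 := by
      rw [← real_inner_self_eq_norm_sq]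
      simp only [inner_sub_left, inner_sub_right, real_inner_smul_left, real_inner_smul_right,
        hww, hzz, f3]
      ring
    have hxval : ⟪T (w - C⁻¹ • z), w - C⁻¹ • z⟫ - m * ‖w - C⁻¹ • z‖ ^ 2
        = (⟪T w, w⟫ - m) - 2 * C⁻¹ * ‖z‖ ^ 2 + C⁻¹ ^ 2 * (⟪T z, z⟫ - m * ‖z‖ ^ 2) := by
      rw [hnx, map_sub, map_smul]
      simp only [inner_sub_left, inner_sub_right, real_inner_smul_left, real_inner_smul_right,
        f1, f2]
      ring
    have hquad := hBpos (w - C⁻¹ • z) (Eᗮ.sub_mem hwE (Eᗮ.smul_mem _ hzE))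
    rw [hxval] at hquad
    have hCC : C⁻¹ * C = 1 := inv_mul_cancel₀ hCpos.ne'
    have hfin : ‖z‖ ^ 2 ≤ C * (⟪T w, w⟫ - m) := by
      have h4 : C⁻¹ ^ 2 * (⟪T z, z⟫ - m * ‖z‖ ^ 2) ≤ C⁻¹ * ‖z‖ ^ 2 := by
        have h5 : C⁻¹ ^ 2 * (⟪T z, z⟫ - m * ‖z‖ ^ 2) ≤ C⁻¹ ^ 2 * (C * ‖z‖ ^ 2) := by
          apply mul_le_mul_of_nonneg_left hzbound (by positivity)
        calc C⁻¹ ^ 2 * (⟪T z, z⟫ - m * ‖z‖ ^ 2) ≤ C⁻¹ ^ 2 * (C * ‖z‖ ^ 2) := h5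
        _ = C⁻¹ * ‖z‖ ^ 2 := by
            rw [pow_two]
            calc C⁻¹ * C⁻¹ * (C * ‖z‖ ^ 2) = C⁻¹ * (C⁻¹ * C) * ‖z‖ ^ 2 := by ring
            _ = C⁻¹ * ‖z‖ ^ 2 := by rw [hCC, mul_one]
      have h6 : 0 ≤ (⟪T w, w⟫ - m) - C⁻¹ * ‖z‖ ^ 2 := by linarith
      have h7 : C⁻¹ * ‖z‖ ^ 2 ≤ ⟪T w, w⟫ - m := by linarith
      calc ‖z‖ ^ 2 = C * (C⁻¹ * ‖z‖ ^ 2) := by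
            rw [← mul_assoc, mul_inv_cancel₀ hCpos.ne', one_mul]
      _ ≤ C * (⟪T w, w⟫ - m) := mul_le_mul_of_nonneg_left h7 hCpos.le
    have hAw : c ≤ ‖z‖ := by
      have h8 := hcb w (hEperpker hwE)
      rw [hw1, mul_one] at h8
      have h9 : A w = -z := by
        rw [hA, hz, ContinuousLinearMap.sub_apply, ContinuousLinearMap.smul_apply,
          ContinuousLinearMap.one_apply]
        abel
      rw [h9, norm_neg] at h8
      exact h8
    have hCβ : C * (⟪T w, w⟫ - m) < c ^ 2 := by
      have := mul_lt_mul_of_pos_left hβlt hCpos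
      rw [mul_div_cancel₀ _ hCpos.ne'] at this
      exact this
    have hc2 : c ^ 2 ≤ ‖z‖ ^ 2 := pow_le_pow_left₀ hc.le hAw 2
    linarith
  obtain ⟨ε, hε, hcoer⟩ := hpos
  -- the orthogonal projection onto `E`
  set P : H →L[ℝ] H := E.subtypeL ∘L Submodule.orthogonalProjection E with hP
  have hPmem : ∀ x : H, P x ∈ E := fun x => (Submodule.orthogonalProjection E x).2
  have hPperp : ∀ x : H, x - P x ∈ Eᗮ := fun x => Submodule.sub_starProjection_mem_orthogonal x
  have hPuniq : ∀ x y : H, y ∈ E → x - y ∈ Eᗮ → P x = y := by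
    intro x y hy hxy
    have h := Submodule.eq_starProjection_of_mem_orthogonal (K := E) (u := x) hy hxy
    rw [hP]
    exact h
  have hPT : ∀ x, P (T x) = T (P x) := by
    intro x
    apply hPuniq
    · exact hmemE_T _ (hPmem x)
    · have h2 : T (x - P x) ∈ Eᗮ := hEperp_T _ (hPperp x)
      rwa [map_sub] at h2
  have hPeq : ∀ (g : G) (u : H), P (ρ g u) = ρ g (P u) := by
    intro g u
    apply hPuniq
    · exact hmemE_ρ g _ (hPmem u)
    · have h2 : ρ g (u - P u) ∈ Eᗮ := hEperp_ρ g _ (hPperp u)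
      rwa [map_sub] at h2
  have hPsa : IsSelfAdjoint P := isSelfAdjoint_starProjection E
  have hsymT : ∀ x y : H, ⟪T x, y⟫ = ⟪x, T y⟫ := fun x y => hsym x y
  have hsymP : ∀ x y : H, ⟪P x, y⟫ = ⟪x, P y⟫ := fun x y => hPsa.isSymmetric x y
  have hsymTP : ∀ x y : H, ⟪(T * P) x, y⟫ = ⟪x, (T * P) y⟫ := by
    intro x y
    rw [ContinuousLinearMap.mul_apply, ContinuousLinearMap.mul_apply]
    calc ⟪T (P x), y⟫ = ⟪P x, T y⟫ := hsymT _ _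
    _ = ⟪x, P (T y)⟫ := hsymP _ _
    _ = ⟪x, T (P y)⟫ := by rw [hPT]
  have hTPsa : IsSelfAdjoint (T * P) :=
    LinearMap.IsSymmetric.isSelfAdjoint (fun x y => hsymTP x y)
  have hSsa : IsSelfAdjoint (T - T * P + ε • P) := by
    apply LinearMap.IsSymmetric.isSelfAdjoint
    intro x y
    show ⟪(T - T * P + ε • P) x, y⟫ = ⟪x, (T - T * P + ε • P) y⟫
    simp only [ContinuousLinearMap.add_apply, ContinuousLinearMap.sub_apply,
      ContinuousLinearMap.smul_apply]
    rw [inner_add_left, inner_add_right, inner_sub_left, inner_sub_right,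
      real_inner_smul_left, real_inner_smul_right, hsymT x y, hsymTP x y, hsymP x y]
  have hKsa : IsSelfAdjoint (T * P - ε • P) := by
    apply LinearMap.IsSymmetric.isSelfAdjoint
    intro x y
    show ⟪(T * P - ε • P) x, y⟫ = ⟪x, (T * P - ε • P) y⟫
    simp only [ContinuousLinearMap.sub_apply, ContinuousLinearMap.smul_apply]
    rw [inner_sub_left, inner_sub_right, real_inner_smul_left, real_inner_smul_right,
      hsymTP x y, hsymP x y]
  have hSapply : ∀ u : H, (T - T * P + ε • P) u = T (u - P u) + ε • P u := by
    intro u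
    simp only [ContinuousLinearMap.add_apply, ContinuousLinearMap.sub_apply,
      ContinuousLinearMap.smul_apply, ContinuousLinearMap.mul_apply]
    rw [map_sub]
  have hScoer : ∀ u : H, ε * ‖u‖ ^ 2 ≤ ⟪(T - T * P + ε • P) u, u⟫ := by
    intro u
    have hvE : u - P u ∈ Eᗮ := hPperp u
    have hwE : P u ∈ E := hPmem u
    have h1 : ⟪P u, u - P u⟫ = 0 := hvE (P u) hwE
    have h1' : ⟪u - P u, P u⟫ = 0 := by rw [real_inner_comm]; exact h1
    have h2 : ⟪T (u - P u), P u⟫ = 0 := by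
      rw [real_inner_comm]
      exact hEperp_T _ hvE (P u) hwE
    have hdecomp : (u - P u) + P u = u := by abel
    have hnorm2 : ‖u‖ ^ 2 = ‖u - P u‖ ^ 2 + ‖P u‖ ^ 2 := by
      calc ‖u‖ ^ 2 = ‖(u - P u) + P u‖ ^ 2 := by rw [hdecomp]
      _ = ‖u - P u‖ ^ 2 + 2 * ⟪u - P u, P u⟫ + ‖P u‖ ^ 2 := norm_add_sq_real _ _
      _ = ‖u - P u‖ ^ 2 + ‖P u‖ ^ 2 := by rw [h1']; ring
    have hC := hcoer (u - P u) hvE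
    have hPuu : ⟪P u, u⟫ = ‖P u‖ ^ 2 := by
      have h3 := h1
      rw [inner_sub_right, sub_eq_zero] at h3
      rw [h3, real_inner_self_eq_norm_sq]
    have hTvu : ⟪T (u - P u), u⟫ = ⟪T (u - P u), u - P u⟫ := by
      rw [inner_sub_right, h2, sub_zero]
    rw [hSapply u, inner_add_left, real_inner_smul_left, hTvu, hPuu, hnorm2]
    nlinarith [sq_nonneg ‖P u‖]
  have hSunit : IsUnit (T - T * P + ε • P) := aux_coercive_isUnit _ hε hScoer
  have hSpos : ∀ u : H, u ≠ 0 → 0 < ⟪(T - T * P + ε • P) u, u⟫ := by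
    intro u hu
    have h1 : 0 < ε * ‖u‖ ^ 2 := mul_pos hε (pow_pos (norm_pos_iff.mpr hu) 2)
    linarith [hScoer u]
  have hSspec : spectrum ℝ (T - T * P + ε • P) ⊆ Set.Ioi (0:ℝ) := by
    intro μ hμ
    rw [Set.mem_Ioi]
    by_contra hμ0
    push_neg at hμ0
    have hcoer2 : ∀ u : H, ε * ‖u‖ ^ 2 ≤ ⟪((T - T * P + ε • P) - μ • 1) u, u⟫ := by
      intro u
      rw [ContinuousLinearMap.sub_apply, ContinuousLinearMap.smul_apply,
        ContinuousLinearMap.one_apply, inner_sub_left, real_inner_smul_left,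
        real_inner_self_eq_norm_sq]
      have := hScoer u
      nlinarith [sq_nonneg ‖u‖]
    have hunit2 := aux_coercive_isUnit _ hε hcoer2
    have hneg : algebraMap ℝ (H →L[ℝ] H) μ - (T - T * P + ε • P)
        = -((T - T * P + ε • P) - μ • 1) := by
      rw [neg_sub, Algebra.algebraMap_eq_smul_one]
    exact (spectrum.mem_iff.mp hμ) (hneg ▸ hunit2.neg)
  have hKmem : ∀ x : H, (T * P - ε • P) x ∈ E := by
    intro x
    rw [ContinuousLinearMap.sub_apply, ContinuousLinearMap.smul_apply,
      ContinuousLinearMap.mul_apply]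
    exact E.sub_mem (hmemE_T _ (hPmem x)) (E.smul_mem _ (hPmem x))
  have hKcpt : IsCompactOperator ⇑(T * P - ε • P) := aux_compact _ E hEfd hKmem
  have hSequiv : IsEquivariant ρ (T - T * P + ε • P) := by
    intro g u
    simp only [ContinuousLinearMap.add_apply, ContinuousLinearMap.sub_apply,
      ContinuousLinearMap.smul_apply, ContinuousLinearMap.mul_apply]
    rw [map_add, map_sub, map_smul, hequiv g u, hPeq g u, hequiv g (P u)]
  have hKequiv : IsEquivariant ρ (T * P - ε • P) := by
    intro g u
    simp only [ContinuousLinearMap.sub_apply, ContinuousLinearMap.smul_apply,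
      ContinuousLinearMap.mul_apply]
    rw [map_sub, map_smul, hPeq g u, hequiv g (P u)]
  exact ⟨T - T * P + ε • P, T * P - ε • P, hSsa, hSequiv, hSunit, hSpos, hSspec,
    hKcpt, hKsa, hKequiv, by module⟩
end

section
/- Let Q₁ and Q₂ be G-equivariant symmetries on H and define, for i = 1,2, the set B_i = { M Q_i M* + K : M ∈ L(H) invertible and G-equivariant, K ∈ L(H) compact, selfadjoint and G-equivariant }. If B₁ ∩ B₂ ≠ ∅, then B₁ = B₂. -/
open scoped RealInnerProductSpace

/-- The set of operators of the form `M Q M* + K` with `M` invertible and `G`-equivariant and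
`K` compact, selfadjoint and `G`-equivariant. -/
def cogredientOrbit {H : Type*} [NormedAddCommGroup H] [InnerProductSpace ℝ H] [CompleteSpace H]
    {G : Type*} [Group G] (ρ : G →* (H ≃ₗᵢ[ℝ] H)) (Q : H →L[ℝ] H) : Set (H →L[ℝ] H) :=
  {T | ∃ M K : H →L[ℝ] H, IsUnit M ∧ IsEquivariant ρ M ∧
    IsCompactOperator ⇑K ∧ IsSelfAdjoint K ∧ IsEquivariant ρ K ∧
    T = M * Q * ContinuousLinearMap.adjoint M + K}

section helpers
variable {H : Type*} [NormedAddCommGroup H] [InnerProductSpace ℝ H] [CompleteSpace H]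
  {G : Type*} [Group G] {ρ : G →* (H ≃ₗᵢ[ℝ] H)}

set_option linter.unusedSectionVars false

lemma IsEquivariant.mul' {S T : H →L[ℝ] H} (hS : IsEquivariant ρ S) (hT : IsEquivariant ρ T) :
    IsEquivariant ρ (S * T) := fun g u => by
  simp [ContinuousLinearMap.mul_apply, hT g u, hS g (T u)]

lemma IsEquivariant.add' {S T : H →L[ℝ] H} (hS : IsEquivariant ρ S) (hT : IsEquivariant ρ T) :
    IsEquivariant ρ (S + T) := fun g u => by
  simp [ContinuousLinearMap.add_apply, hS g u, hT g u]

lemma IsEquivariant.neg' {T : H →L[ℝ] H} (hT : IsEquivariant ρ T) :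
    IsEquivariant ρ (-T) := fun g u => by
  simp [hT g u]

lemma IsEquivariant.inv' {M : H →L[ℝ] H} (hu : IsUnit M) (hM : IsEquivariant ρ M) :
    IsEquivariant ρ (↑hu.unit⁻¹ : H →L[ℝ] H) := by
  intro g u
  set N := (↑hu.unit⁻¹ : H →L[ℝ] H) with hN
  have h1 : (M * N : H →L[ℝ] H) = 1 := by
    rw [hN]; have h := hu.unit.mul_inv; rwa [hu.unit_spec] at h
  have h2 : (N * M : H →L[ℝ] H) = 1 := by
    rw [hN]; have h := hu.unit.inv_mul; rwa [hu.unit_spec] at h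
  have hMN : ∀ v, M (N v) = v := by
    intro v
    calc M (N v) = (M * N) v := rfl
      _ = (1 : H →L[ℝ] H) v := by rw [h1]
      _ = v := rfl
  have hNM : ∀ v, N (M v) = v := by
    intro v
    calc N (M v) = (N * M) v := rfl
      _ = (1 : H →L[ℝ] H) v := by rw [h2]
      _ = v := rfl
  calc N (ρ g u) = N (ρ g (M (N u))) := by rw [hMN]
    _ = N (M (ρ g (N u))) := by rw [hM]
    _ = ρ g (N u) := hNM _

lemma IsEquivariant.adjoint' {T : H →L[ℝ] H} (hT : IsEquivariant ρ T) :
    IsEquivariant ρ (ContinuousLinearMap.adjoint T) := by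
  intro g u
  apply ext_inner_right ℝ
  intro v
  have hsymm : ∀ w, (ρ g).symm w = ρ g⁻¹ w := by
    intro w; rw [map_inv]; rfl
  calc ⟪(ContinuousLinearMap.adjoint T) (ρ g u), v⟫
      = ⟪ρ g u, T v⟫ := ContinuousLinearMap.adjoint_inner_left _ _ _
    _ = ⟪ρ g u, ρ g ((ρ g).symm (T v))⟫ := by rw [(ρ g).apply_symm_apply]
    _ = ⟪u, (ρ g).symm (T v)⟫ := (ρ g).inner_map_map _ _
    _ = ⟪u, T ((ρ g).symm v)⟫ := by
        rw [hsymm, hsymm, hT g⁻¹ v]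
    _ = ⟪(ContinuousLinearMap.adjoint T) u, (ρ g).symm v⟫ :=
        (ContinuousLinearMap.adjoint_inner_left _ _ _).symm
    _ = ⟪ρ g ((ContinuousLinearMap.adjoint T) u), ρ g ((ρ g).symm v)⟫ :=
        ((ρ g).inner_map_map _ _).symm
    _ = ⟪ρ g ((ContinuousLinearMap.adjoint T) u), v⟫ := by rw [(ρ g).apply_symm_apply]

local notation "adj" => ContinuousLinearMap.adjoint

lemma compact_conj {K N : H →L[ℝ] H} (hK : IsCompactOperator ⇑K) :
    IsCompactOperator ⇑(N * K * adj N) := by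
  have h1 : IsCompactOperator (⇑K ∘ ⇑(adj N)) := hK.comp_clm (adj N)
  have h2 : IsCompactOperator (⇑N ∘ (⇑K ∘ ⇑(adj N))) := h1.clm_comp N
  exact h2

lemma orbit_trans {Q T S : H →L[ℝ] H} (hT : T ∈ cogredientOrbit ρ Q)
    (hS : S ∈ cogredientOrbit ρ T) : S ∈ cogredientOrbit ρ Q := by
  obtain ⟨M, K, hMu, hMeq, hKc, hKsa, hKeq, hTeq⟩ := hT
  obtain ⟨N, L, hNu, hNeq, hLc, hLsa, hLeq, hSeq⟩ := hS
  refine ⟨N * M, N * K * adj N + L, hNu.mul hMu, hNeq.mul' hMeq,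
    (compact_conj hKc).add hLc, ?_, ((hNeq.mul' hKeq).mul' hNeq.adjoint').add' hLeq, ?_⟩
  · have h1 : IsSelfAdjoint (N * K * star N) := hKsa.conjugate N
    rw [ContinuousLinearMap.star_eq_adjoint] at h1
    exact h1.add hLsa
  · have hadj : adj (N * M) = adj M * adj N := by
      rw [← ContinuousLinearMap.star_eq_adjoint, ← ContinuousLinearMap.star_eq_adjoint,
        ← ContinuousLinearMap.star_eq_adjoint, star_mul]
    rw [hSeq, hTeq, hadj]
    noncomm_ring

lemma orbit_symm {Q T : H →L[ℝ] H} (hT : T ∈ cogredientOrbit ρ Q) :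
    Q ∈ cogredientOrbit ρ T := by
  obtain ⟨M, K, hMu, hMeq, hKc, hKsa, hKeq, hTeq⟩ := hT
  set N := (↑hMu.unit⁻¹ : H →L[ℝ] H) with hN
  have h2 : (N * M : H →L[ℝ] H) = 1 := by
    rw [hN]; have h := hMu.unit.inv_mul; rwa [hMu.unit_spec] at h
  have hadj : adj M * adj N = 1 := by
    rw [← ContinuousLinearMap.star_eq_adjoint, ← ContinuousLinearMap.star_eq_adjoint,
      ← star_mul, h2, star_one]
  refine ⟨N, -(N * K * adj N), hMu.unit⁻¹.isUnit, IsEquivariant.inv' hMu hMeq,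
    (compact_conj hKc).neg, ?_, ((IsEquivariant.inv' hMu hMeq).mul' hKeq).mul'
      (IsEquivariant.inv' hMu hMeq).adjoint' |>.neg', ?_⟩
  · have h1 : IsSelfAdjoint (N * K * star N) := hKsa.conjugate N
    rw [ContinuousLinearMap.star_eq_adjoint] at h1
    exact h1.neg
  · rw [hTeq]
    have : N * (M * Q * adj M + K) * adj N + -(N * K * adj N)
        = (N * M) * Q * (adj M * adj N) := by noncomm_ring
    rw [this, h2, hadj, one_mul, mul_one]

end helpers


theorem stmt4
    {H : Type*} [NormedAddCommGroup H] [InnerProductSpace ℝ H] [CompleteSpace H]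
    [TopologicalSpace.SeparableSpace H]
    {G : Type*} [Group G] [TopologicalSpace G] [IsTopologicalGroup G] [CompactSpace G]
    {EG : Type*} [NormedAddCommGroup EG] [NormedSpace ℝ EG]
    {HG : Type*} [TopologicalSpace HG] {IG : ModelWithCorners ℝ EG HG}
    [ChartedSpace HG G] [LieGroup IG (⊤ : ℕ∞) G]
    (ρ : G →* (H ≃ₗᵢ[ℝ] H)) (hρ : ∀ u : H, Continuous fun g : G => ρ g u)
    (Q₁ Q₂ : H →L[ℝ] H)
    (hQ₁sa : IsSelfAdjoint Q₁) (hQ₁sq : Q₁ * Q₁ = 1) (hQ₁eq : IsEquivariant ρ Q₁)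
    (hQ₂sa : IsSelfAdjoint Q₂) (hQ₂sq : Q₂ * Q₂ = 1) (hQ₂eq : IsEquivariant ρ Q₂)
    (hne : (cogredientOrbit ρ Q₁ ∩ cogredientOrbit ρ Q₂).Nonempty) :
    cogredientOrbit ρ Q₁ = cogredientOrbit ρ Q₂ := by
  obtain ⟨T, hT1, hT2⟩ := hne
  apply Set.Subset.antisymm
  · intro S hS
    exact orbit_trans hT2 (orbit_trans (orbit_symm hT1) hS)
  · intro S hS
    exact orbit_trans hT1 (orbit_trans (orbit_symm hT2) hS)
end

section
/- Let Q be a symmetry on H, let K : [0,1] → L(H) be norm-continuous with every K_λ compact and selfadjoint, and set L_λ = Q + K_λ. Let (P_n) be an increasing sequence of finite-rank orthogonal projections on H, each commuting with Q, converging weakly to the identity, and let H_n = range(P_n). Then there exists n₀ ∈ ℕ such that for all n ≥ n₀ and all λ ∈ [0,1], the operator (I_H − P_n) L_λ restricted to the orthogonal complement H_n^⊥, viewed as a bounded operator from H_n^⊥ to H_n^⊥, is bijective; in fact ‖(I_H − P_n) L_λ u‖ ≥ (1/2)‖u‖ for all u ∈ H_n^⊥. -/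
open scoped RealInnerProductSpace
open Filter Metric Set

section Aux

variable {H : Type*} [NormedAddCommGroup H] [InnerProductSpace ℝ H] [CompleteSpace H]

private lemma aux_inner_proj {P : H →L[ℝ] H} (hsa : IsSelfAdjoint P)
    (hid : IsIdempotentElem P) (u : H) : ⟪P u, u⟫ = ‖P u‖ ^ 2 := by
  have h1 : P (P u) = P u := by
    have := congrArg (fun T : H →L[ℝ] H => T u) hid
    simpa [ContinuousLinearMap.mul_apply] using this
  calc ⟪P u, u⟫ = ⟪P (P u), u⟫ := by rw [h1]
    _ = ⟪P u, P u⟫ := hsa.isSymmetric (P u) u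
    _ = ‖P u‖ ^ 2 := real_inner_self_eq_norm_sq _

private lemma aux_norm_sub_proj {P : H →L[ℝ] H} (hsa : IsSelfAdjoint P)
    (hid : IsIdempotentElem P) (u : H) :
    ‖u - P u‖ ^ 2 = ‖u‖ ^ 2 - ‖P u‖ ^ 2 := by
  have h := norm_sub_sq_real u (P u)
  have h2 : ⟪u, P u⟫ = ‖P u‖ ^ 2 := by
    rw [real_inner_comm]; exact aux_inner_proj hsa hid u
  rw [h2] at h; linarith

private lemma aux_contr {P : H →L[ℝ] H} (hsa : IsSelfAdjoint P)
    (hid : IsIdempotentElem P) (u : H) : ‖u - P u‖ ≤ ‖u‖ := by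
  have h := aux_norm_sub_proj hsa hid u
  nlinarith [norm_nonneg (u - P u), norm_nonneg u, sq_nonneg ‖P u‖]

private lemma aux_strong (P : ℕ → H →L[ℝ] H)
    (hPsa : ∀ n, IsSelfAdjoint (P n)) (hPidem : ∀ n, IsIdempotentElem (P n))
    (hPweak : ∀ u v : H, Filter.Tendsto (fun n => ⟪P n u, v⟫) Filter.atTop (nhds ⟪u, v⟫))
    (u : H) : Tendsto (fun n => P n u) atTop (nhds u) := by
  have key : Tendsto (fun n => ‖u - P n u‖ ^ 2) atTop (nhds 0) := by
    have heq : ∀ n, ‖u - P n u‖ ^ 2 = ⟪u, u⟫ - ⟪P n u, u⟫ := by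
      intro n
      rw [aux_norm_sub_proj (hPsa n) (hPidem n) u, real_inner_self_eq_norm_sq,
        aux_inner_proj (hPsa n) (hPidem n) u]
    simp only [heq]
    have := tendsto_const_nhds (x := ⟪u, u⟫) (f := atTop (α := ℕ)) |>.sub (hPweak u u)
    simpa using this
  have key2 : Tendsto (fun n => ‖u - P n u‖) atTop (nhds 0) := by
    have := key.sqrt
    simpa [Real.sqrt_sq (norm_nonneg _)] using this
  rw [tendsto_iff_norm_sub_tendsto_zero]
  simpa [norm_sub_rev] using key2

/-- If `A` is compact and `P n → 1` strongly with `‖1 - P n‖ ≤ 1`, then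
`‖(1 - P n) ∘ A‖ → 0`. -/
private lemma aux_comp_small (P : ℕ → H →L[ℝ] H)
    (hcontr : ∀ n (v : H), ‖v - P n v‖ ≤ ‖v‖)
    (hst : ∀ v : H, Tendsto (fun n => P n v) atTop (nhds v))
    (A : H →L[ℝ] H) (hA : IsCompactOperator ⇑A) {ε : ℝ} (hε : 0 < ε) :
    ∀ᶠ n in atTop, ∀ u : H, ‖A u - P n (A u)‖ ≤ ε * ‖u‖ := by
  have hA' : IsCompactOperator ⇑(A : H →ₗ[ℝ] H) := by
    rwa [ContinuousLinearMap.coe_coe]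
  have hM : IsCompact (closure (⇑(A : H →ₗ[ℝ] H) '' closedBall 0 1)) :=
    hA'.isCompact_closure_image_closedBall (𝕜₁ := ℝ) 1
  obtain ⟨t, hts, htfin, htcov⟩ :=
    finite_approx_of_totallyBounded hM.totallyBounded (ε / 3) (by positivity)
  have hev : ∀ᶠ n in atTop, ∀ y ∈ t, ‖y - P n y‖ < ε / 3 := by
    refine htfin.eventually_all.2 fun y _ => ?_
    have h0 : Tendsto (fun n => ‖y - P n y‖) atTop (nhds 0) := by
      have := (tendsto_const_nhds (x := y) (f := atTop (α := ℕ))).sub (hst y)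
      simpa using this.norm
    exact h0.eventually_lt_const (by positivity)
  filter_upwards [hev] with n hn u
  rcases eq_or_ne u 0 with rfl | hu
  · simp
  · have hnu : (0 : ℝ) < ‖u‖ := norm_pos_iff.2 hu
    set w := ‖u‖⁻¹ • u with hw
    have hwb : w ∈ closedBall (0 : H) 1 := by
      simp [hw, norm_smul, abs_of_nonneg (le_of_lt (inv_pos.2 hnu)),
        inv_mul_cancel₀ hnu.ne', mem_closedBall, dist_zero_right, le_refl]
    have hmem : A w ∈ closure (⇑(A : H →ₗ[ℝ] H) '' closedBall 0 1) :=
      subset_closure ⟨w, hwb, rfl⟩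
    obtain ⟨y, hy, hball⟩ := mem_iUnion₂.1 (htcov hmem)
    have hdist : ‖A w - y‖ < ε / 3 := by
      rw [← dist_eq_norm]; exact mem_ball.1 hball
    have hy3 : ‖y - P n y‖ < ε / 3 := hn y hy
    have key : ‖A w - P n (A w)‖ ≤ ε := by
      have hsplit : A w - P n (A w) = (A w - y - P n (A w - y)) + (y - P n y) := by
        rw [map_sub]; abel
      calc ‖A w - P n (A w)‖
          ≤ ‖A w - y - P n (A w - y)‖ + ‖y - P n y‖ := by rw [hsplit]; exact norm_add_le _ _
        _ ≤ ‖A w - y‖ + ‖y - P n y‖ := by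
            have := hcontr n (A w - y); linarith
        _ ≤ ε := by linarith
    have hu' : u = ‖u‖ • w := by
      rw [hw, smul_smul, mul_inv_cancel₀ hnu.ne', one_smul]
    have hsc : A u - P n (A u) = ‖u‖ • (A w - P n (A w)) := by
      simp only [hw, map_smul, smul_sub, smul_smul, mul_inv_cancel₀ hnu.ne', one_smul]
    have hnorm : ‖A u - P n (A u)‖ = ‖u‖ * ‖A w - P n (A w)‖ := by
      rw [hsc, norm_smul, Real.norm_eq_abs, abs_of_nonneg (norm_nonneg u)]
    rw [hnorm, mul_comm ε ‖u‖]
    exact mul_le_mul_of_nonneg_left key (norm_nonneg u)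

end Aux

set_option maxHeartbeats 1000000 in
set_option synthInstance.maxHeartbeats 400000 in
theorem stmt9
    {H : Type*} [NormedAddCommGroup H] [InnerProductSpace ℝ H] [CompleteSpace H]
    [TopologicalSpace.SeparableSpace H]
    (Q : H →L[ℝ] H) (hQsa : IsSelfAdjoint Q) (hQsq : Q * Q = 1)
    (K : Set.Icc (0:ℝ) 1 → H →L[ℝ] H) (hK : Continuous K)
    (hKc : ∀ l, IsCompactOperator ⇑(K l)) (hKsa : ∀ l, IsSelfAdjoint (K l))
    (P : ℕ → H →L[ℝ] H)
    (hPsa : ∀ n, IsSelfAdjoint (P n)) (hPidem : ∀ n, IsIdempotentElem (P n))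
    (hPfin : ∀ n, FiniteDimensional ℝ (LinearMap.range (P n : H →ₗ[ℝ] H)))
    (hPmono : ∀ n, LinearMap.range (P n : H →ₗ[ℝ] H) ≤ LinearMap.range (P (n + 1) : H →ₗ[ℝ] H))
    (hPcomm : ∀ n, P n * Q = Q * P n)
    (hPweak : ∀ u v : H, Filter.Tendsto (fun n => ⟪P n u, v⟫) Filter.atTop (nhds ⟪u, v⟫)) :
    ∃ n₀ : ℕ, ∀ n ≥ n₀, ∀ l : Set.Icc (0:ℝ) 1,
      Set.BijOn (⇑((1 - P n) * (Q + K l)))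
        ((LinearMap.range (P n : H →ₗ[ℝ] H))ᗮ : Set H) ((LinearMap.range (P n : H →ₗ[ℝ] H))ᗮ : Set H) ∧
      ∀ u ∈ (LinearMap.range (P n : H →ₗ[ℝ] H))ᗮ, (1 / 2 : ℝ) * ‖u‖ ≤ ‖((1 - P n) * (Q + K l)) u‖ := by
  classical
  -- Basic projection facts
  have hPP : ∀ n (x : H), P n (P n x) = P n x := by
    intro n x
    have := congrArg (fun T : H →L[ℝ] H => T x) (hPidem n)
    simpa [ContinuousLinearMap.mul_apply] using this
  have hcontr : ∀ n (v : H), ‖v - P n v‖ ≤ ‖v‖ := fun n v =>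
    aux_contr (hPsa n) (hPidem n) v
  have hst : ∀ v : H, Tendsto (fun n => P n v) atTop (nhds v) :=
    aux_strong P hPsa hPidem hPweak
  -- Q facts
  have hQQ : ∀ x : H, Q (Q x) = x := by
    intro x
    have := congrArg (fun T : H →L[ℝ] H => T x) hQsq
    simpa [ContinuousLinearMap.mul_apply] using this
  have hQiso : ∀ x : H, ‖Q x‖ = ‖x‖ := by
    intro x
    have h1 : ‖Q x‖ ^ 2 = ‖x‖ ^ 2 := by
      rw [← real_inner_self_eq_norm_sq, ← real_inner_self_eq_norm_sq]
      calc ⟪Q x, Q x⟫ = ⟪x, Q (Q x)⟫ := hQsa.isSymmetric x (Q x)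
        _ = ⟪x, x⟫ := by rw [hQQ]
    exact (sq_eq_sq₀ (norm_nonneg _) (norm_nonneg _)).1 h1
  -- Uniform smallness of (1 - P n) ∘ K l for large n
  have hcub : ∀ᶠ n in atTop, ∀ l : Set.Icc (0:ℝ) 1, ∀ u : H,
      ‖(K l) u - P n ((K l) u)‖ ≤ (1 / 2) * ‖u‖ := by
    have hcpt : IsCompact (Set.range K) := isCompact_range hK
    obtain ⟨t, hts, htfin, htcov⟩ :=
      finite_approx_of_totallyBounded hcpt.totallyBounded (1 / 4) (by norm_num)
    have hev : ∀ᶠ n in atTop, ∀ A ∈ t, ∀ u : H, ‖A u - P n (A u)‖ ≤ (1 / 4) * ‖u‖ := by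
      refine htfin.eventually_all.2 fun A hA => ?_
      obtain ⟨l, hl⟩ := hts hA
      exact hl ▸ aux_comp_small P hcontr hst (K l) (hKc l) (by norm_num)
    filter_upwards [hev] with n hn l u
    have hmem : K l ∈ ⋃ y ∈ t, ball y (1 / 4) := htcov ⟨l, rfl⟩
    obtain ⟨A, hA, hball⟩ := mem_iUnion₂.1 hmem
    have hdist : ‖K l - A‖ < 1 / 4 := by
      rw [← dist_eq_norm]; exact mem_ball.1 hball
    have hsplit : (K l) u - P n ((K l) u) =
        ((K l - A) u - P n ((K l - A) u)) + (A u - P n (A u)) := by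
      simp only [ContinuousLinearMap.sub_apply, map_sub]; abel
    have h1 : ‖(K l - A) u - P n ((K l - A) u)‖ ≤ ‖(K l - A) u‖ := hcontr n _
    have h2 : ‖(K l - A) u‖ ≤ ‖K l - A‖ * ‖u‖ := (K l - A).le_opNorm u
    have h3 : ‖A u - P n (A u)‖ ≤ (1 / 4) * ‖u‖ := hn A hA u
    calc ‖(K l) u - P n ((K l) u)‖
        ≤ ‖(K l - A) u - P n ((K l - A) u)‖ + ‖A u - P n (A u)‖ := by
          rw [hsplit]; exact norm_add_le _ _
      _ ≤ (1 / 2) * ‖u‖ := by nlinarith [norm_nonneg u]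
  obtain ⟨n₀, hn₀⟩ := eventually_atTop.1 hcub
  refine ⟨n₀, fun n hn l => ?_⟩
  have hsmall : ∀ u : H, ‖(K l) u - P n ((K l) u)‖ ≤ (1 / 2) * ‖u‖ := hn₀ n hn l
  set E := (LinearMap.range (P n : H →ₗ[ℝ] H))ᗮ with hE
  -- membership facts
  have hrange : ∀ v : H, v - P n v ∈ E := by
    intro v
    rw [hE, Submodule.mem_orthogonal]
    rintro w ⟨x, rfl⟩
    calc ⟪P n x, v - P n v⟫ = ⟪x, P n (v - P n v)⟫ := (hPsa n).isSymmetric x (v - P n v)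
      _ = 0 := by rw [map_sub, hPP]; simp
  have hPzero : ∀ u ∈ E, P n u = 0 := by
    intro u hu
    have h0 : ⟪P n u, u⟫ = 0 := (Submodule.mem_orthogonal _ _).1 hu (P n u) ⟨u, rfl⟩
    have := aux_inner_proj (hPsa n) (hPidem n) u
    rw [h0] at this
    have : ‖P n u‖ = 0 := by nlinarith [norm_nonneg (P n u)]
    simpa using this
  have hQE : ∀ u ∈ E, Q u ∈ E := by
    intro u hu
    rw [hE, Submodule.mem_orthogonal]
    rintro w ⟨x, rfl⟩
    have hcx : Q (P n x) = P n (Q x) := by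
      have := congrArg (fun T : H →L[ℝ] H => T x) (hPcomm n)
      simpa [ContinuousLinearMap.mul_apply] using this.symm
    calc ⟪P n x, Q u⟫ = ⟪Q (P n x), u⟫ := (hQsa.isSymmetric (P n x) u).symm
      _ = ⟪P n (Q x), u⟫ := by rw [hcx]
      _ = 0 := (Submodule.mem_orthogonal _ _).1 hu (P n (Q x)) ⟨Q x, rfl⟩
  -- formula for the operator on E
  set T : H →L[ℝ] H := (1 - P n) * (Q + K l) with hT
  have hTapp : ∀ v : H, T v = (Q v + (K l) v) - P n (Q v + (K l) v) := by
    intro v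
    simp [hT, ContinuousLinearMap.mul_apply, ContinuousLinearMap.sub_apply,
      ContinuousLinearMap.add_apply, ContinuousLinearMap.one_apply]
  have hTE : ∀ u ∈ E, T u = Q u + ((K l) u - P n ((K l) u)) := by
    intro u hu
    rw [hTapp, map_add, hPzero (Q u) (hQE u hu)]
    abel
  -- the lower bound
  have hlow : ∀ u ∈ E, (1 / 2 : ℝ) * ‖u‖ ≤ ‖T u‖ := by
    intro u hu
    rw [hTE u hu]
    have h1 : ‖Q u‖ ≤ ‖Q u + ((K l) u - P n ((K l) u))‖ + ‖(K l) u - P n ((K l) u)‖ := by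
      calc ‖Q u‖ = ‖(Q u + ((K l) u - P n ((K l) u))) + (-((K l) u - P n ((K l) u)))‖ := by
            congr 1; abel
        _ ≤ _ := by
            refine (norm_add_le _ _).trans ?_
            rw [norm_neg]
    have h2 := hsmall u
    have h3 := hQiso u
    linarith
  -- maps to
  have hmaps : Set.MapsTo (⇑T) (E : Set H) (E : Set H) := by
    intro u _
    rw [SetLike.mem_coe]
    show T u ∈ E
    rw [hTapp]
    exact hrange _
  -- injectivity
  have hinj : Set.InjOn (⇑T) (E : Set H) := by
    intro u hu v hv huv
    have hsub : u - v ∈ E := Submodule.sub_mem _ hu hv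
    have h0 : T (u - v) = 0 := by rw [map_sub, huv, sub_self]
    have := hlow (u - v) hsub
    rw [h0, norm_zero] at this
    have : ‖u - v‖ ≤ 0 := by linarith
    have : u - v = 0 := by
      rw [← norm_le_zero_iff]; exact this
    exact sub_eq_zero.1 this
  -- surjectivity via invertibility on E
  have hsurj : Set.SurjOn (⇑T) (E : Set H) (E : Set H) := by
    haveI : CompleteSpace E := Submodule.instOrthogonalCompleteSpace _
    set Qhat : E →L[ℝ] E :=
      ContinuousLinearMap.codRestrict (Q.comp E.subtypeL) E (fun x => hQE x x.2) with hQhat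
    set Chat : E →L[ℝ] E :=
      ContinuousLinearMap.codRestrict (((1 - P n) * K l).comp E.subtypeL) E
        (fun x => by
          simpa [ContinuousLinearMap.mul_apply, ContinuousLinearMap.sub_apply,
            ContinuousLinearMap.one_apply] using hrange ((K l) (x : H))) with hChat
    have hQhatApp : ∀ x : E, (Qhat x : H) = Q (x : H) := fun x => rfl
    have hChatApp : ∀ x : E, (Chat x : H) = (K l) (x : H) - P n ((K l) (x : H)) := by
      intro x
      simp [hChat, ContinuousLinearMap.mul_apply, ContinuousLinearMap.sub_apply,
        ContinuousLinearMap.one_apply]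
    have hQhat2 : Qhat * Qhat = 1 := by
      ext x
      show Q (Q (x : H)) = (x : H)
      exact hQQ x
    set Qunit : (E →L[ℝ] E)ˣ := ⟨Qhat, Qhat, hQhat2, hQhat2⟩ with hQunit
    have hQC : ‖-(Qhat * Chat)‖ < 1 := by
      have hb : ‖-(Qhat * Chat)‖ ≤ 1 / 2 := by
        refine ContinuousLinearMap.opNorm_le_bound _ (by norm_num) fun x => ?_
        have e1 : ‖(-(Qhat * Chat)) x‖ =
            ‖-(Q ((K l) (x : H) - P n ((K l) (x : H))))‖ := rfl
        rw [e1, norm_neg, hQiso]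
        exact hsmall (x : H)
      linarith
    set Nunit : (E →L[ℝ] E)ˣ := Units.oneSub (-(Qhat * Chat)) hQC with hNunit
    set Tunit : (E →L[ℝ] E)ˣ := Qunit * Nunit with hTunit
    have hTval : (Tunit : E →L[ℝ] E) = Qhat + Chat := by
      show Qhat * (1 - -(Qhat * Chat)) = Qhat + Chat
      rw [sub_neg_eq_add, mul_add, mul_one, ← mul_assoc, hQhat2, one_mul]
    intro w hw
    set what : E := ⟨w, hw⟩ with hwhat
    set uhat : E := (↑Tunit⁻¹ : E →L[ℝ] E) what with huhat
    refine ⟨(uhat : H), uhat.2, ?_⟩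
    have hTu : T (uhat : H) = ((Qhat + Chat) uhat : H) := by
      rw [hTE _ uhat.2]
      simp only [ContinuousLinearMap.add_apply, Submodule.coe_add, hQhatApp, hChatApp]
    rw [hTu, ← hTval]
    have : (Tunit : E →L[ℝ] E) ((↑Tunit⁻¹ : E →L[ℝ] E) what) = what := by
      rw [← ContinuousLinearMap.mul_apply, Units.mul_inv, ContinuousLinearMap.one_apply]
    rw [huhat, this]
  exact ⟨⟨hmaps, hinj, hsurj⟩, hlow⟩
end

section
/- Let Q be a symmetry on H, K₀ ∈ L(H) compact and selfadjoint, and suppose L₀ = Q + K₀ is invertible. Let (P_n) be an increasing sequence of finite-rank orthogonal projections on H, each commuting with Q, converging weakly to the identity, and let H_n = range(P_n). Then there exists n₀ ∈ ℕ such that for all n ≥ n₀ and all s ∈ [0,1], the operator s L₀ + (1−s)((I_H − P_n) L₀ (I_H − P_n) + P_n L₀ P_n) is invertible; in particular, for all n ≥ n₀ the compression P_n L₀ P_n, viewed as an operator from H_n to H_n, is invertible. -/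
open scoped RealInnerProductSpace

open Filter Metric ContinuousLinearMap in
private lemma aux_inner_proj_s10 {H : Type*} [NormedAddCommGroup H] [InnerProductSpace ℝ H]
    [CompleteSpace H] (R : H →L[ℝ] H) (hsa : IsSelfAdjoint R) (hid : IsIdempotentElem R)
    (x : H) : ⟪R x, R x⟫ = ⟪R x, x⟫ := by
  have hadj : ContinuousLinearMap.adjoint R = R := ContinuousLinearMap.isSelfAdjoint_iff'.mp hsa
  calc ⟪R x, R x⟫ = ⟪x, R (R x)⟫ := by
        have h := ContinuousLinearMap.adjoint_inner_right R x (R x)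
        rw [hadj] at h; exact h.symm
    _ = ⟪x, R x⟫ := by
        have : R (R x) = R x := by
          have := congrArg (fun T : H →L[ℝ] H => T x) hid
          simpa [ContinuousLinearMap.mul_apply] using this
        rw [this]
    _ = ⟪R x, x⟫ := real_inner_comm _ _

private lemma aux_proj_norm_le {H : Type*} [NormedAddCommGroup H] [InnerProductSpace ℝ H]
    [CompleteSpace H] (R : H →L[ℝ] H) (hsa : IsSelfAdjoint R) (hid : IsIdempotentElem R)
    (x : H) : ‖R x‖ ≤ ‖x‖ := by
  have h1 : ‖R x‖ ^ 2 = ⟪R x, x⟫ := by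
    rw [← aux_inner_proj_s10 R hsa hid x, real_inner_self_eq_norm_sq]
  have h2 : ⟪R x, x⟫ ≤ ‖R x‖ * ‖x‖ := real_inner_le_norm _ _
  rcases eq_or_lt_of_le (norm_nonneg (R x)) with h0 | h0
  · rw [← h0]; exact norm_nonneg x
  · have : ‖R x‖ * ‖R x‖ ≤ ‖R x‖ * ‖x‖ := by rw [← sq]; rw [h1] at *; linarith [h1 ▸ h2]
    exact le_of_mul_le_mul_left this h0

theorem stmt10
    {H : Type*} [NormedAddCommGroup H] [InnerProductSpace ℝ H] [CompleteSpace H]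
    [TopologicalSpace.SeparableSpace H]
    (Q : H →L[ℝ] H) (hQsa : IsSelfAdjoint Q) (hQsq : Q * Q = 1)
    (K₀ : H →L[ℝ] H) (hKc : IsCompactOperator ⇑K₀) (hKsa : IsSelfAdjoint K₀)
    (L₀ : H →L[ℝ] H) (hL₀ : L₀ = Q + K₀) (hinv : IsUnit L₀)
    (P : ℕ → H →L[ℝ] H)
    (hPsa : ∀ n, IsSelfAdjoint (P n)) (hPidem : ∀ n, IsIdempotentElem (P n))
    (hPfin : ∀ n, FiniteDimensional ℝ (LinearMap.range (P n : H →ₗ[ℝ] H)))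
    (hPmono : ∀ n, LinearMap.range (P n : H →ₗ[ℝ] H) ≤ LinearMap.range (P (n + 1) : H →ₗ[ℝ] H))
    (hPcomm : ∀ n, P n * Q = Q * P n)
    (hPweak : ∀ u v : H, Filter.Tendsto (fun n => ⟪P n u, v⟫) Filter.atTop (nhds ⟪u, v⟫)) :
    ∃ n₀ : ℕ, ∀ n ≥ n₀,
      (∀ s ∈ Set.Icc (0:ℝ) 1,
        IsUnit (s • L₀ + (1 - s) • ((1 - P n) * L₀ * (1 - P n) + P n * L₀ * P n))) ∧
      Set.BijOn (⇑(P n * L₀ * P n))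
        (LinearMap.range (P n : H →ₗ[ℝ] H) : Set H) (LinearMap.range (P n : H →ₗ[ℝ] H) : Set H) := by
  classical
  open Filter Metric ContinuousLinearMap in
  -- basic facts about the complementary projections
  set R : ℕ → H →L[ℝ] H := fun n => 1 - P n with hR
  have hRsa : ∀ n, IsSelfAdjoint (R n) := fun n => (IsSelfAdjoint.one _).sub (hPsa n)
  have hRidem : ∀ n, IsIdempotentElem (R n) := fun n => (hPidem n).one_sub
  have hRnorm : ∀ n x, ‖R n x‖ ≤ ‖x‖ := fun n => aux_proj_norm_le _ (hRsa n) (hRidem n)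
  have hPnorm : ∀ n x, ‖P n x‖ ≤ ‖x‖ := fun n => aux_proj_norm_le _ (hPsa n) (hPidem n)
  -- strong convergence of R n to 0
  have hstrong : ∀ u : H, Filter.Tendsto (fun n => ‖R n u‖) Filter.atTop (nhds 0) := by
    intro u
    have h1 : ∀ n, ‖R n u‖ = Real.sqrt (⟪u, u⟫ - ⟪P n u, u⟫) := by
      intro n
      have := aux_inner_proj_s10 (R n) (hRsa n) (hRidem n) u
      have h2 : ⟪R n u, R n u⟫ = ⟪u, u⟫ - ⟪P n u, u⟫ := by
        rw [this]
        simp [hR, ContinuousLinearMap.sub_apply, ContinuousLinearMap.one_apply,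
          inner_sub_left]
      rw [← Real.sqrt_sq (norm_nonneg (R n u)), ← real_inner_self_eq_norm_sq, h2]
    simp only [h1]
    have : Filter.Tendsto (fun n => ⟪u, u⟫ - ⟪P n u, u⟫) Filter.atTop (nhds 0) := by
      have := (hPweak u u).const_sub ⟪u, u⟫
      simpa using this
    have := (Real.continuous_sqrt.tendsto 0).comp this
    simpa [Function.comp_def] using this
  -- norm of R n ∘ K₀ is eventually small
  have hsmall : ∀ ε > (0:ℝ), ∀ᶠ n in Filter.atTop, ‖R n * K₀‖ ≤ 2 * ε := by
    intro ε hε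
    have hS : IsCompact (closure (⇑K₀ '' Metric.closedBall 0 1)) := by
      exact hKc.isCompact_closure_image_closedBall (𝕜₁ := ℝ) (f := (K₀ : H →ₗ[ℝ] H)) 1
    obtain ⟨t, htf, hts⟩ := (totallyBounded_iff.mp hS.totallyBounded) ε hε
    have hev : ∀ᶠ n in Filter.atTop, ∀ y ∈ t, ‖R n y‖ < ε := by
      rw [htf.eventually_all]
      intro y _
      exact (hstrong y).eventually (Filter.Tendsto.eventually_lt_const hε tendsto_id) |>.mono
        (fun n hn => hn)
    filter_upwards [hev] with n hn
    refine ContinuousLinearMap.opNorm_le_of_unit_norm (by positivity) (fun x hx => ?_)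
    have hx1 : K₀ x ∈ closure (⇑K₀ '' Metric.closedBall 0 1) :=
      subset_closure ⟨x, by simp [hx], rfl⟩
    obtain ⟨y, hy, hxy⟩ := Set.mem_iUnion₂.mp (hts hx1)
    have hxy' : ‖K₀ x - y‖ < ε := by
      rw [← dist_eq_norm]; exact mem_ball.mp hxy
    have : R n (K₀ x) = R n (K₀ x - y) + R n y := by rw [← map_add, sub_add_cancel]
    calc ‖(R n * K₀) x‖ = ‖R n (K₀ x - y) + R n y‖ := by
          rw [ContinuousLinearMap.mul_apply, this]
      _ ≤ ‖R n (K₀ x - y)‖ + ‖R n y‖ := norm_add_le _ _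
      _ ≤ ‖K₀ x - y‖ + ‖R n y‖ := by linarith [hRnorm n (K₀ x - y)]
      _ ≤ ε + ε := by linarith [hn y hy, hxy'.le]
      _ = 2 * ε := by ring
  -- the error operator
  set E : ℕ → H →L[ℝ] H := fun n => P n * K₀ * R n + R n * K₀ * P n with hE
  have hEnorm : ∀ n, ‖E n‖ ≤ 2 * ‖R n * K₀‖ := by
    intro n
    have h1 : ‖R n * K₀ * P n‖ ≤ ‖R n * K₀‖ := by
      calc ‖R n * K₀ * P n‖ ≤ ‖R n * K₀‖ * ‖P n‖ := ContinuousLinearMap.opNorm_comp_le _ _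
        _ ≤ ‖R n * K₀‖ * 1 := by
            refine mul_le_mul_of_nonneg_left ?_ (norm_nonneg _)
            exact ContinuousLinearMap.opNorm_le_bound _ zero_le_one
              (fun x => by simpa using hPnorm n x)
        _ = ‖R n * K₀‖ := mul_one _
    have h2 : ‖P n * K₀ * R n‖ = ‖R n * K₀ * P n‖ := by
      have hadj : ContinuousLinearMap.adjoint (R n * K₀ * P n) = P n * K₀ * R n := by
        have e1 : (R n * K₀ * P n : H →L[ℝ] H) = (R n) ∘L (K₀ ∘L (P n)) := by
          rw [mul_assoc]; rfl
        rw [e1, ContinuousLinearMap.adjoint_comp, ContinuousLinearMap.adjoint_comp,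
          ContinuousLinearMap.isSelfAdjoint_iff'.mp (hRsa n),
          ContinuousLinearMap.isSelfAdjoint_iff'.mp hKsa,
          ContinuousLinearMap.isSelfAdjoint_iff'.mp (hPsa n)]
        rw [mul_assoc]; rfl
      rw [← hadj, LinearIsometryEquiv.norm_map]
    calc ‖E n‖ ≤ ‖P n * K₀ * R n‖ + ‖R n * K₀ * P n‖ := norm_add_le _ _
      _ = ‖R n * K₀ * P n‖ + ‖R n * K₀ * P n‖ := by rw [h2]
      _ ≤ 2 * ‖R n * K₀‖ := by linarith
  -- the off-diagonal part of L₀ equals E n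
  have hoff : ∀ n, P n * L₀ * R n + R n * L₀ * P n = E n := by
    intro n
    have hp : P n * P n = P n := hPidem n
    have h1 : P n * Q * R n = 0 := by
      show P n * Q * (1 - P n) = 0
      calc P n * Q * (1 - P n) = P n * Q - P n * Q * P n := by noncomm_ring
        _ = Q * P n - Q * P n * P n := by rw [hPcomm n]
        _ = 0 := by rw [mul_assoc, hp, sub_self]
    have h2 : R n * Q * P n = 0 := by
      show (1 - P n) * Q * P n = 0
      calc (1 - P n) * Q * P n = Q * P n - P n * Q * P n := by noncomm_ring
        _ = Q * P n - Q * P n * P n := by rw [hPcomm n]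
        _ = 0 := by rw [mul_assoc, hp, sub_self]
    rw [hL₀, hE]
    simp only [mul_add, add_mul]
    rw [h1, h2]
    abel
  -- choose n₀
  obtain ⟨u, hu⟩ := hinv
  set c : ℝ := ‖((u⁻¹ : (H →L[ℝ] H)ˣ) : H →L[ℝ] H)‖ with hc
  have hcpos : (0:ℝ) < c + 1 := by positivity
  have hεpos : (0:ℝ) < 1 / (8 * (c + 1)) := by positivity
  obtain ⟨n₀, hn₀⟩ := Filter.eventually_atTop.mp (hsmall _ hεpos)
  refine ⟨n₀, fun n hn => ?_⟩
  have hEsmall : ‖E n‖ * c < 1 := by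
    have h1 := hEnorm n
    have h2 := hn₀ n hn
    have hcnn : 0 ≤ c := norm_nonneg _
    have hElt : ‖E n‖ ≤ 1 / (2 * (c + 1)) := by
      calc ‖E n‖ ≤ 2 * ‖R n * K₀‖ := h1
        _ ≤ 2 * (2 * (1 / (8 * (c + 1)))) := by
            have := mul_le_mul_of_nonneg_left h2 (by norm_num : (0:ℝ) ≤ 2)
            linarith
        _ = 1 / (2 * (c + 1)) := by field_simp; ring
    calc ‖E n‖ * c ≤ (1 / (2 * (c + 1))) * c :=
          mul_le_mul_of_nonneg_right hElt hcnn
      _ < 1 := by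
          rw [div_mul_eq_mul_div, one_mul, div_lt_one (by positivity)]
          linarith
  -- main invertibility claim
  have hmain : ∀ s ∈ Set.Icc (0:ℝ) 1,
      IsUnit (s • L₀ + (1 - s) • ((1 - P n) * L₀ * (1 - P n) + P n * L₀ * P n)) := by
    intro s hs
    set D : H →L[ℝ] H := (1 - P n) * L₀ * (1 - P n) + P n * L₀ * P n with hD
    have hdec : D = L₀ - E n := by
      rw [← hoff n, hD, hR]
      noncomm_ring
    have heq : s • L₀ + (1 - s) • D = L₀ - (1 - s) • E n := by
      rw [hdec, smul_sub, ← add_sub_assoc, ← add_smul,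
        show s + (1 - s) = (1:ℝ) by ring, one_smul]
    rw [heq]
    -- L₀ - (1-s) • E n = u * (1 - ↑u⁻¹ * ((1-s) • E n))
    set X : H →L[ℝ] H := (1 - s) • E n with hX
    have hfac : L₀ - X
        = (u : H →L[ℝ] H) * (1 - ((u⁻¹ : (H →L[ℝ] H)ˣ) : H →L[ℝ] H) * X) := by
      have h3 : (u : H →L[ℝ] H) * (1 - ((u⁻¹ : (H →L[ℝ] H)ˣ) : H →L[ℝ] H) * X)
          = (u : H →L[ℝ] H)
            - ((u : H →L[ℝ] H) * ((u⁻¹ : (H →L[ℝ] H)ˣ) : H →L[ℝ] H)) * X := by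
        noncomm_ring
      rw [h3, u.mul_inv, one_mul, hu]
    have hlt : ‖((u⁻¹ : (H →L[ℝ] H)ˣ) : H →L[ℝ] H) * X‖ < 1 := by
      have h1 : ‖((u⁻¹ : (H →L[ℝ] H)ˣ) : H →L[ℝ] H) * X‖
          ≤ c * ‖X‖ := ContinuousLinearMap.opNorm_comp_le _ _
      have h2 : ‖X‖ ≤ ‖E n‖ := by
        have hns : ‖X‖ = ‖(1 - s)‖ * ‖E n‖ := by rw [hX]; exact norm_smul (1 - s) (E n)
        have habs : |1 - s| ≤ 1 := by
          rw [abs_le]; constructor <;> [linarith [hs.2]; linarith [hs.1]]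
        rw [hns]
        calc ‖(1 - s)‖ * ‖E n‖ ≤ 1 * ‖E n‖ :=
              mul_le_mul_of_nonneg_right (by rwa [Real.norm_eq_abs]) (norm_nonneg _)
          _ = ‖E n‖ := one_mul _
      calc ‖((u⁻¹ : (H →L[ℝ] H)ˣ) : H →L[ℝ] H) * X‖
          ≤ c * ‖X‖ := h1
        _ ≤ c * ‖E n‖ := mul_le_mul_of_nonneg_left h2 (norm_nonneg _)
        _ = ‖E n‖ * c := mul_comm _ _
        _ < 1 := hEsmall
    rw [hfac]
    exact (u.isUnit).mul (isUnit_one_sub_of_norm_lt_one hlt)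
  refine ⟨hmain, ?_⟩
  -- BijOn part
  set p : H →L[ℝ] H := P n with hpdef
  have hp : p * p = p := hPidem n
  set D : H →L[ℝ] H := (1 - p) * L₀ * (1 - p) + p * L₀ * p with hD
  have hDunit : IsUnit D := by
    have := hmain 0 (by constructor <;> norm_num)
    simpa using this
  obtain ⟨d, hd⟩ := hDunit
  have hcomm : D * p = p * D := by
    have h1 : D * p = p * L₀ * p := by
      rw [hD, add_mul]
      have e1 : (1 - p) * L₀ * (1 - p) * p = 0 := by
        have : (1 - p) * p = 0 := by rw [sub_mul, one_mul, hp, sub_self]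
        rw [mul_assoc, this, mul_zero]
      have e2 : p * L₀ * p * p = p * L₀ * p := by rw [mul_assoc, hp]
      rw [e1, e2, zero_add]
    have h2 : p * D = p * L₀ * p := by
      rw [hD, mul_add]
      have e1 : p * ((1 - p) * L₀ * (1 - p)) = 0 := by
        have h0 : p * (1 - p) = 0 := by rw [mul_sub, mul_one, hp, sub_self]
        calc p * ((1 - p) * L₀ * (1 - p)) = (p * (1 - p)) * (L₀ * (1 - p)) := by
              noncomm_ring
          _ = 0 := by rw [h0, zero_mul]
      have e2 : p * (p * L₀ * p) = p * L₀ * p := by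
        rw [← mul_assoc, ← mul_assoc, hp]
      rw [e1, e2, zero_add]
    rw [h1, h2]
  have hcomm' : (↑d⁻¹ : H →L[ℝ] H) * p = p * ↑d⁻¹ := by
    have hdc : (↑d : H →L[ℝ] H) * p = p * ↑d := by rw [hd]; exact hcomm
    calc (↑d⁻¹ : H →L[ℝ] H) * p = ↑d⁻¹ * p * (↑d * ↑d⁻¹) := by
          rw [d.mul_inv, mul_one]
      _ = ↑d⁻¹ * (p * ↑d) * ↑d⁻¹ := by noncomm_ring
      _ = ↑d⁻¹ * (↑d * p) * ↑d⁻¹ := by rw [hdc]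
      _ = (↑d⁻¹ * ↑d) * (p * ↑d⁻¹) := by noncomm_ring
      _ = p * ↑d⁻¹ := by rw [d.inv_mul, one_mul]
  -- membership characterization
  have hmem : ∀ x : H, x ∈ (LinearMap.range (P n : H →ₗ[ℝ] H) : Set H) ↔ p x = x := by
    intro x
    constructor
    · rintro ⟨y, rfl⟩
      show p (p y) = p y
      have := congrArg (fun T : H →L[ℝ] H => T y) hp
      simpa [ContinuousLinearMap.mul_apply] using this
    · intro hx
      exact ⟨x, hx⟩
  have happ : ∀ x : H, p x = x → D x = (p * L₀ * p) x := by
    intro x hx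
    have h1x : (1 - p) x = 0 := by
      simp [ContinuousLinearMap.sub_apply, ContinuousLinearMap.one_apply, hx]
    rw [hD]
    simp only [ContinuousLinearMap.add_apply, ContinuousLinearMap.mul_apply]
    rw [h1x, map_zero, map_zero, zero_add]
  have hDinj : Function.Injective ⇑D := by
    intro x y hxy
    have := congrArg (⇑(↑d⁻¹ : H →L[ℝ] H)) hxy
    rwa [← ContinuousLinearMap.mul_apply, ← ContinuousLinearMap.mul_apply, ← hd,
      d.inv_mul, ContinuousLinearMap.one_apply, ContinuousLinearMap.one_apply] at this
  constructor
  · -- MapsTo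
    rintro x hx
    exact ⟨L₀ (p x), rfl⟩
  constructor
  · -- InjOn
    intro x hx y hy hxy
    rw [hmem] at hx hy
    have : D x = D y := by rw [happ x hx, happ y hy]; exact hxy
    exact hDinj this
  · -- SurjOn
    intro z hz
    rw [hmem] at hz
    set x : H := (↑d⁻¹ : H →L[ℝ] H) z with hxdef
    have hxmem : p x = x := by
      rw [hxdef, ← ContinuousLinearMap.mul_apply, ← hcomm', ContinuousLinearMap.mul_apply, hz]
    have hDx : D x = z := by
      rw [hxdef, ← ContinuousLinearMap.mul_apply, ← hd, d.mul_inv,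
        ContinuousLinearMap.one_apply]
    refine ⟨x, (hmem x).mpr hxmem, ?_⟩
    rw [← happ x hxmem, hDx]
end

section
/- Let H be a finite-dimensional real inner product space, L : H → H a selfadjoint linear map, and μ ∈ (−π/2, π/2). On E = H × H define J(u,v) = (−v,u). Then there exists a differentiable curve u : [0,1] → E, not identically zero, satisfying J(u′(t)) = μ·u(t) for all t ∈ [0,1], u(0) ∈ {(w, Lw) : w ∈ H}, and u(1) ∈ H × {0}, if and only if tan(μ) is an eigenvalue of L. -/
open scoped RealInnerProductSpace

theorem stmt13
    {H : Type*} [NormedAddCommGroup H] [InnerProductSpace ℝ H] [FiniteDimensional ℝ H]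
    (L : H →ₗ[ℝ] H) (hL : ∀ u v : H, ⟪L u, v⟫ = ⟪u, L v⟫)
    (μ : ℝ) (hμ : μ ∈ Set.Ioo (-(Real.pi / 2)) (Real.pi / 2)) :
    (∃ u u' : ℝ → H × H,
        (∃ t ∈ Set.Icc (0:ℝ) 1, u t ≠ 0) ∧
        (∀ t ∈ Set.Icc (0:ℝ) 1, HasDerivWithinAt u (u' t) (Set.Icc (0:ℝ) 1) t) ∧
        (∀ t ∈ Set.Icc (0:ℝ) 1, (-(u' t).2, (u' t).1) = μ • u t) ∧
        (u 0).2 = L (u 0).1 ∧ (u 1).2 = 0) ↔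
      ∃ w : H, w ≠ 0 ∧ L w = Real.tan μ • w := by
  have hcos : Real.cos μ ≠ 0 := (Real.cos_pos_of_mem_Ioo ⟨hμ.1, hμ.2⟩).ne'
  have htan : Real.cos μ * Real.tan μ = Real.sin μ := by
    rw [Real.tan_eq_sin_div_cos]; field_simp
  constructor
  · rintro ⟨u, u', ⟨t₀, ht₀, ht₀ne⟩, hderiv, heq, h0, h1⟩
    have heq1 : ∀ t ∈ Set.Icc (0:ℝ) 1, (u' t).1 = μ • (u t).2 := by
      intro t ht
      have := congrArg Prod.snd (heq t ht); simpa using this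
    have heq2 : ∀ t ∈ Set.Icc (0:ℝ) 1, (u' t).2 = -(μ • (u t).1) := by
      intro t ht
      have := congrArg Prod.fst (heq t ht)
      simp only [Prod.fst] at this
      simpa [neg_eq_iff_eq_neg] using this
    set f : ℝ → H × H := fun t =>
      (Real.cos (μ*t) • (u t).1 - Real.sin (μ*t) • (u t).2,
       Real.sin (μ*t) • (u t).1 + Real.cos (μ*t) • (u t).2) with hf
    have hfd : ∀ t ∈ Set.Icc (0:ℝ) 1, HasDerivWithinAt f 0 (Set.Icc (0:ℝ) 1) t := by
      intro t ht
      have hc : HasDerivAt (fun t : ℝ => Real.cos (μ*t)) (-Real.sin (μ*t) * (μ*1)) t :=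
        ((hasDerivAt_id t).const_mul μ).cos
      have hs : HasDerivAt (fun t : ℝ => Real.sin (μ*t)) (Real.cos (μ*t) * (μ*1)) t :=
        ((hasDerivAt_id t).const_mul μ).sin
      have hu1 : HasDerivWithinAt (fun t => (u t).1) ((u' t).1) (Set.Icc (0:ℝ) 1) t :=
        (hderiv t ht).fst
      have hu2 : HasDerivWithinAt (fun t => (u t).2) ((u' t).2) (Set.Icc (0:ℝ) 1) t :=
        (hderiv t ht).snd
      have h1' := ((hc.hasDerivWithinAt.smul hu1).sub (hs.hasDerivWithinAt.smul hu2))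
      have h2' := ((hs.hasDerivWithinAt.smul hu1).add (hc.hasDerivWithinAt.smul hu2))
      have := HasDerivWithinAt.prodMk h1' h2'
      convert this using 1
      · rfl
      rw [heq1 t ht, heq2 t ht]
      refine Prod.ext ?_ ?_ <;> simp <;> module
    have hkey : ∀ t ∈ Set.Icc (0:ℝ) 1, f t = f 0 :=
      constant_of_has_deriv_right_zero
        (fun t ht => (hfd t ht).continuousWithinAt)
        (fun x hx => by
          apply ((hfd x (Set.Ico_subset_Icc_self hx)).mono
            (Set.Icc_subset_Icc_left hx.1)).mono_of_mem_nhdsWithin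
          rw [← Set.Ici_inter_Iic]
          exact Filter.inter_mem self_mem_nhdsWithin
            (mem_nhdsWithin_of_mem_nhds (Iic_mem_nhds hx.2)))
    have hf0 : f 0 = ((u 0).1, (u 0).2) := by simp [hf]
    -- evaluate at 1
    have hf1 := hkey 1 (by norm_num)
    rw [hf0, hf, Prod.ext_iff] at hf1
    simp only [mul_one, h1, smul_zero, sub_zero, add_zero] at hf1
    obtain ⟨e1, e2⟩ := hf1
    refine ⟨(u 0).1, ?_, ?_⟩
    · -- nonzero
      intro hz
      have hb : (u 0).2 = 0 := by rw [h0, hz, map_zero]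
      have hft : f t₀ = 0 := by rw [hkey t₀ ht₀, hf0, hz, hb]; rfl
      rw [hf, Prod.ext_iff] at hft
      obtain ⟨g1, g2⟩ := hft
      simp only [Prod.fst_zero, Prod.snd_zero] at g1 g2
      apply ht₀ne
      have hu1 : (u t₀).1 = 0 := by
        have : (u t₀).1 = Real.cos (μ*t₀) • (Real.cos (μ*t₀) • (u t₀).1 - Real.sin (μ*t₀) • (u t₀).2)
            + Real.sin (μ*t₀) • (Real.sin (μ*t₀) • (u t₀).1 + Real.cos (μ*t₀) • (u t₀).2) := by
          have hpy := Real.sin_sq_add_cos_sq (μ*t₀)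
          match_scalars <;> linarith [hpy]
        rw [this, g1, g2, smul_zero, smul_zero, add_zero]
      have hu2 : (u t₀).2 = 0 := by
        have : (u t₀).2 = -(Real.sin (μ*t₀) • (Real.cos (μ*t₀) • (u t₀).1 - Real.sin (μ*t₀) • (u t₀).2))
            + Real.cos (μ*t₀) • (Real.sin (μ*t₀) • (u t₀).1 + Real.cos (μ*t₀) • (u t₀).2) := by
          have hpy := Real.sin_sq_add_cos_sq (μ*t₀)
          match_scalars <;> linarith [hpy]
        rw [this, g1, g2, smul_zero, smul_zero, neg_zero, add_zero]
      exact Prod.ext hu1 hu2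
    · -- eigenvalue equation
      rw [← h0, ← e2, ← e1, smul_smul, mul_comm (Real.tan μ), htan]
  · rintro ⟨w, hw0, hw⟩
    refine ⟨fun t => (Real.cos (μ*t) • w + Real.sin (μ*t) • L w,
                     Real.cos (μ*t) • L w - Real.sin (μ*t) • w),
           fun t => ((-Real.sin (μ*t) * (μ*1)) • w + (Real.cos (μ*t) * (μ*1)) • L w,
                     (-Real.sin (μ*t) * (μ*1)) • L w - (Real.cos (μ*t) * (μ*1)) • w),
           ⟨0, by norm_num, ?_⟩, ?_, ?_, ?_, ?_⟩
    · intro h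
      apply hw0
      have := congrArg Prod.fst h
      simpa using this
    · intro t ht
      have hc : HasDerivAt (fun t : ℝ => Real.cos (μ*t)) (-Real.sin (μ*t) * (μ*1)) t :=
        ((hasDerivAt_id t).const_mul μ).cos
      have hs : HasDerivAt (fun t : ℝ => Real.sin (μ*t)) (Real.cos (μ*t) * (μ*1)) t :=
        ((hasDerivAt_id t).const_mul μ).sin
      exact (HasDerivAt.prodMk ((hc.smul_const w).add (hs.smul_const (L w)))
        ((hc.smul_const (L w)).sub (hs.smul_const w))).hasDerivWithinAt
    · intro t ht
      refine Prod.ext ?_ ?_ <;> simp <;> module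
    · simp
    · show Real.cos (μ*1) • L w - Real.sin (μ*1) • w = 0
      rw [mul_one, hw, smul_smul, htan, sub_self]
end
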